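/- For every positive integers k and m, Σ_{j=0}^{k−1} B_m(j/k) · c_k(j) = (B_m / k^{m−1}) · J_m(k), where B_m(x) is the m-th Bernoulli polynomial, B_m = B_m(0) is the m-th Bernoulli number, and J_m(k) = Σ_{d | k} μ(k/d) d^m is the Jordan totient function of order m. -/

import Mathlib

open Finset ArithmeticFunction PowerSeries Complex
open scoped ArithmeticFunction.Moebius ArithmeticFunction.zeta

lemma rescale_X' (a : ℚ) : rescale a (X : ℚ⟦X⟧) = C a * X := by
  ext j
  simp only [coeff_rescale, PowerSeries.coeff_X, PowerSeries.coeff_C_mul]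
  split_ifs with h
  · subst h; ring
  · ring

lemma raabe (m n : ℕ) (hn : 0 < n) :
    (n : ℚ) ^ m * ∑ t ∈ Finset.range n, (Polynomial.bernoulli m).eval ((t : ℚ) / (n : ℚ)) =
      bernoulli m * n := by
  have hn0 : (n : ℚ) ≠ 0 := Nat.cast_ne_zero.2 hn.ne'
  set E : ℚ⟦X⟧ := rescale ((n : ℚ)⁻¹) (exp ℚ) with hE
  have hexp1 : (exp ℚ - 1 : ℚ⟦X⟧) ≠ 0 := by
    intro h
    have := congrArg (coeff 1) h
    simp [coeff_exp] at this
  have hE1 : (E - 1 : ℚ⟦X⟧) ≠ 0 := by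
    intro h
    have := congrArg (coeff 1) h
    simp [hE, coeff_rescale, coeff_exp] at this
    exact hn0 (by exact_mod_cast this)
  have hEn : E ^ n = exp ℚ := by
    rw [hE, ← map_pow, exp_pow_eq_rescale_exp, rescale_rescale]
    rw [mul_inv_cancel₀ hn0, rescale_one, RingHom.id_apply]
  set g : ℚ⟦X⟧ := PowerSeries.mk fun j =>
    (1 / j.factorial : ℚ) * ∑ t ∈ Finset.range n, (Polynomial.bernoulli j).eval ((t : ℚ) / n)
    with hgdef
  have hg : g = ∑ i ∈ Finset.range n,
      PowerSeries.mk fun j => Polynomial.aeval ((i : ℚ) / n)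
        ((1 / j.factorial : ℚ) • Polynomial.bernoulli j) := by
    ext j
    rw [hgdef, coeff_mk, map_sum]
    simp [Polynomial.coe_aeval_eq_eval, mul_sum]
  have h1 : g * (exp ℚ - 1) = X * ∑ i ∈ Finset.range n, E ^ i := by
    rw [hg, Finset.sum_mul]
    rw [Finset.mul_sum]
    refine Finset.sum_congr rfl fun i _ => ?_
    rw [Polynomial.bernoulli_generating_function ((i : ℚ) / n)]
    congr 1
    rw [hE, ← map_pow, exp_pow_eq_rescale_exp, rescale_rescale]
    congr 1
  have h4 : g * (E - 1) = X := by
    apply mul_right_cancel₀ hexp1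
    calc g * (E - 1) * (exp ℚ - 1) = g * (exp ℚ - 1) * (E - 1) := by ring
    _ = X * ((∑ i ∈ Finset.range n, E ^ i) * (E - 1)) := by rw [h1]; ring
    _ = X * (exp ℚ - 1) := by rw [geom_sum_mul, hEn]
  have h5 : (PowerSeries.mk fun j =>
      Polynomial.aeval (0 : ℚ) ((1 / j.factorial : ℚ) • Polynomial.bernoulli j)) *
      (exp ℚ - 1) = X := by
    have := Polynomial.bernoulli_generating_function (0 : ℚ)
    rwa [rescale_zero, RingHom.comp_apply, constantCoeff_exp, map_one, mul_one] at this
  have h6 : (rescale ((n : ℚ)⁻¹) (PowerSeries.mk fun j =>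
      Polynomial.aeval (0 : ℚ) ((1 / j.factorial : ℚ) • Polynomial.bernoulli j))) * (E - 1)
      = C (n : ℚ)⁻¹ * X := by
    rw [← rescale_X' ((n : ℚ)⁻¹), ← h5, map_mul, map_sub, map_one]
  have h7 : g = C (n : ℚ) * rescale ((n : ℚ)⁻¹) (PowerSeries.mk fun j =>
      Polynomial.aeval (0 : ℚ) ((1 / j.factorial : ℚ) • Polynomial.bernoulli j)) := by
    apply mul_right_cancel₀ hE1
    rw [h4, mul_assoc, h6, ← mul_assoc, ← map_mul, mul_inv_cancel₀ hn0, map_one, one_mul]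
  have h8 := congrArg (coeff m) h7
  rw [hgdef, coeff_mk, PowerSeries.coeff_C_mul, coeff_rescale, coeff_mk] at h8
  simp only [Polynomial.coe_aeval_eq_eval, Polynomial.eval_smul, smul_eq_mul,
    Polynomial.bernoulli_eval_zero] at h8
  have hf : (m.factorial : ℚ) ≠ 0 := Nat.cast_ne_zero.2 m.factorial_ne_zero
  field_simp at h8
  apply mul_left_cancel₀ hf
  rw [h8, one_div, inv_pow]
  field_simp

/-- The Ramanujan sum `c_k(j) = ∑_{1 ≤ m ≤ k, gcd(m,k)=1} exp(2πimj/k)`. -/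
noncomputable def ramanujanSum (k : ℕ) (j : ℤ) : ℂ :=
  ∑ m ∈ (Finset.Icc 1 k).filter (fun m => Nat.gcd m k = 1),
    Complex.exp (2 * (Real.pi : ℂ) * Complex.I * (m : ℂ) * (j : ℂ) / (k : ℂ))

lemma geom_exp_sum (q : ℕ) (hq : 0 < q) (j : ℤ) :
    ∑ s ∈ Finset.Icc 1 q, Complex.exp (2 * (Real.pi : ℂ) * Complex.I * (s : ℂ) * (j : ℂ) / (q : ℂ))
      = if (q : ℤ) ∣ j then (q : ℂ) else 0 := by
  have hq0 : (q : ℂ) ≠ 0 := Nat.cast_ne_zero.2 hq.ne'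
  set x : ℂ := Complex.exp (2 * (Real.pi : ℂ) * Complex.I * (j : ℂ) / (q : ℂ)) with hx
  have hterm : ∀ s : ℕ, Complex.exp (2 * (Real.pi : ℂ) * Complex.I * (s : ℂ) * (j : ℂ) / (q : ℂ))
      = x ^ s := by
    intro s
    rw [hx, ← Complex.exp_nat_mul]
    congr 1
    ring
  simp_rw [hterm]
  have hxq : x ^ q = 1 := by
    rw [hx, ← Complex.exp_nat_mul]
    have : (q : ℂ) * (2 * (Real.pi : ℂ) * Complex.I * (j : ℂ) / (q : ℂ))
        = (j : ℂ) * (2 * (Real.pi : ℂ) * Complex.I) := by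
      field_simp
    rw [this, Complex.exp_int_mul_two_pi_mul_I]
  split_ifs with hdvd
  · obtain ⟨t, rfl⟩ := hdvd
    have hx1 : x = 1 := by
      rw [hx]
      have : 2 * (Real.pi : ℂ) * Complex.I * ((q * t : ℤ) : ℂ) / (q : ℂ)
          = (t : ℂ) * (2 * (Real.pi : ℂ) * Complex.I) := by
        push_cast
        field_simp
      rw [this, Complex.exp_int_mul_two_pi_mul_I]
    simp [hx1]
  · have hx1 : x ≠ 1 := by
      intro h
      rw [hx, Complex.exp_eq_one_iff] at h
      obtain ⟨t, ht⟩ := h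
      apply hdvd
      refine ⟨t, ?_⟩
      have hpi : (2 * (Real.pi : ℂ) * Complex.I) ≠ 0 := by
        simp [Real.pi_ne_zero, Complex.I_ne_zero, Complex.ofReal_ne_zero]
      have : (j : ℂ) = (q : ℂ) * (t : ℂ) := by
        field_simp at ht
        apply mul_left_cancel₀ hpi
        linear_combination (2 * (Real.pi : ℂ) * Complex.I) * ht
      exact_mod_cast this
    rw [← Finset.Ico_add_one_right_eq_Icc, geom_sum_Ico hx1 (by omega)]
    rw [pow_succ, hxq, one_mul, pow_one, sub_self, zero_div]


lemma moebius_sum_divisors (g : ℕ) :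
    (∑ d ∈ g.divisors, ((μ d : ℤ) : ℂ)) = if g = 1 then 1 else 0 := by
  have h2 : (μ * (ζ : ArithmeticFunction ℤ)) g = (1 : ArithmeticFunction ℤ) g := by
    rw [moebius_mul_coe_zeta]
  rw [coe_mul_zeta_apply, one_apply] at h2
  calc (∑ d ∈ g.divisors, ((μ d : ℤ) : ℂ)) = ((∑ d ∈ g.divisors, μ d : ℤ) : ℂ) := by
        push_cast; rfl
  _ = _ := by rw [h2]; split_ifs <;> simp

lemma ramanujanSum_eq (k : ℕ) (hk : 0 < k) (j : ℤ) :
    ramanujanSum k j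
      = ∑ d ∈ k.divisors, ((μ (k / d) : ℤ) : ℂ) * (if (d : ℤ) ∣ j then (d : ℂ) else 0) := by
  have hk0 : k ≠ 0 := hk.ne'
  have step1 : ramanujanSum k j
      = ∑ d ∈ k.divisors, ((μ d : ℤ) : ℂ) *
          ∑ a ∈ (Finset.Icc 1 k).filter (fun a => d ∣ a),
            Complex.exp (2 * (Real.pi : ℂ) * Complex.I * (a : ℂ) * (j : ℂ) / (k : ℂ)) := by
    rw [ramanujanSum, Finset.sum_filter]
    have key : ∀ a ∈ Finset.Icc 1 k,
        (if Nat.gcd a k = 1 then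
            Complex.exp (2 * (Real.pi : ℂ) * Complex.I * (a : ℂ) * (j : ℂ) / (k : ℂ)) else 0)
          = ∑ d ∈ k.divisors, (if d ∣ a then ((μ d : ℤ) : ℂ) *
              Complex.exp (2 * (Real.pi : ℂ) * Complex.I * (a : ℂ) * (j : ℂ) / (k : ℂ)) else 0) := by
      intro a ha
      have hdiv : (Nat.gcd a k).divisors = k.divisors.filter (· ∣ a) := by
        ext d
        simp only [Nat.mem_divisors, Finset.mem_filter, Nat.dvd_gcd_iff]
        constructor
        · rintro ⟨⟨h1, h2⟩, -⟩; exact ⟨⟨h2, hk0⟩, h1⟩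
        · rintro ⟨⟨h2, -⟩, h1⟩
          exact ⟨⟨h1, h2⟩, Nat.gcd_ne_zero_right hk0⟩
      rw [← Finset.sum_filter, ← Finset.sum_mul, ← hdiv, moebius_sum_divisors]
      split_ifs <;> simp
    rw [Finset.sum_congr rfl key, Finset.sum_comm]
    refine Finset.sum_congr rfl fun d _ => ?_
    rw [Finset.mul_sum, Finset.sum_filter]
  rw [step1]
  have step2 : ∀ d ∈ k.divisors,
      ((μ d : ℤ) : ℂ) * ∑ a ∈ (Finset.Icc 1 k).filter (fun a => d ∣ a),
          Complex.exp (2 * (Real.pi : ℂ) * Complex.I * (a : ℂ) * (j : ℂ) / (k : ℂ))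
        = ((μ d : ℤ) : ℂ) * (if ((k / d : ℕ) : ℤ) ∣ j then ((k / d : ℕ) : ℂ) else 0) := by
    intro d hd
    rw [Nat.mem_divisors] at hd
    obtain ⟨hdk, -⟩ := hd
    have hd0 : 0 < d := Nat.pos_of_ne_zero (by rintro rfl; rw [zero_dvd_iff] at hdk; exact hk0 hdk)
    have hq0 : 0 < k / d := Nat.div_pos (Nat.le_of_dvd hk hdk) hd0
    have hkdq : k = d * (k / d) := (Nat.mul_div_cancel' hdk).symm
    congr 1
    have himg : (Finset.Icc 1 k).filter (fun a => d ∣ a)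
        = (Finset.Icc 1 (k / d)).image (fun s => d * s) := by
      ext a
      simp only [Finset.mem_filter, Finset.mem_Icc, Finset.mem_image]
      constructor
      · rintro ⟨⟨ha1, hak⟩, s, rfl⟩
        refine ⟨s, ⟨Nat.pos_of_ne_zero (by rintro rfl; omega), ?_⟩, rfl⟩
        rw [hkdq] at hak
        exact Nat.le_of_mul_le_mul_left hak hd0
      · rintro ⟨s, ⟨hs1, hsq⟩, rfl⟩
        exact ⟨⟨Nat.mul_pos hd0 hs1, by rw [hkdq]; exact Nat.mul_le_mul_left d hsq⟩, ⟨s, rfl⟩⟩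
    rw [himg, Finset.sum_image (fun s _ t _ h => Nat.eq_of_mul_eq_mul_left hd0 h)]
    have hterm : ∀ s : ℕ,
        Complex.exp (2 * (Real.pi : ℂ) * Complex.I * ((d * s : ℕ) : ℂ) * (j : ℂ) / (k : ℂ))
        = Complex.exp (2 * (Real.pi : ℂ) * Complex.I * (s : ℂ) * (j : ℂ) / ((k / d : ℕ) : ℂ)) := by
      intro s
      congr 1
      have hqC : ((k / d : ℕ) : ℂ) ≠ 0 := Nat.cast_ne_zero.2 hq0.ne'
      have hdC : (d : ℂ) ≠ 0 := Nat.cast_ne_zero.2 hd0.ne'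
      have hkC : (k : ℂ) = (d : ℂ) * ((k / d : ℕ) : ℂ) := by
        exact_mod_cast congrArg (fun x : ℕ => (x : ℂ)) hkdq
      rw [hkC]
      push_cast
      field_simp
    rw [Finset.sum_congr rfl fun s _ => hterm s]
    exact geom_exp_sum (k / d) hq0 j
  rw [Finset.sum_congr rfl step2]
  have key := Nat.sum_div_divisors (α := ℂ) k
    (fun d => ((μ (k / d) : ℤ) : ℂ) * (if (d : ℤ) ∣ j then (d : ℂ) else 0))
  rw [← key]
  refine Finset.sum_congr rfl fun d hd => ?_
  rw [Nat.mem_divisors] at hd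
  rw [Nat.div_div_self hd.1 hk0]

theorem bernoulli_poly_weighted_ramanujan_sum (k m : ℕ) (hk : 0 < k) (hm : 0 < m) :
    ∑ j ∈ Finset.range k, ((((Polynomial.bernoulli m).eval ((j : ℚ) / (k : ℚ)) : ℚ)) : ℂ) *
        ramanujanSum k j =
      ((bernoulli m : ℂ) / (k : ℂ) ^ (m - 1)) *
        ∑ d ∈ k.divisors, (moebius (k / d) : ℂ) * (d : ℂ) ^ m := by
  have hk0 : k ≠ 0 := hk.ne'
  obtain ⟨p, rfl⟩ : ∃ p, m = p + 1 := ⟨m - 1, (Nat.succ_pred_eq_of_pos hm).symm⟩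
  calc ∑ j ∈ Finset.range k, ((((Polynomial.bernoulli (p+1)).eval ((j : ℚ) / (k : ℚ)) : ℚ)) : ℂ) *
        ramanujanSum k j
      = ∑ j ∈ Finset.range k, ∑ d ∈ k.divisors,
          ((((Polynomial.bernoulli (p+1)).eval ((j : ℚ) / (k : ℚ)) : ℚ)) : ℂ) *
            (((μ (k / d) : ℤ) : ℂ) * (if (d : ℤ) ∣ (j : ℤ) then (d : ℂ) else 0)) := by
        refine Finset.sum_congr rfl fun j _ => ?_
        rw [ramanujanSum_eq k hk, Finset.mul_sum]
  _ = ∑ d ∈ k.divisors, ∑ j ∈ Finset.range k,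
          ((((Polynomial.bernoulli (p+1)).eval ((j : ℚ) / (k : ℚ)) : ℚ)) : ℂ) *
            (((μ (k / d) : ℤ) : ℂ) * (if (d : ℤ) ∣ (j : ℤ) then (d : ℂ) else 0)) :=
        Finset.sum_comm
  _ = ∑ d ∈ k.divisors, ((bernoulli (p+1) : ℂ) / (k : ℂ) ^ (p + 1 - 1)) *
          (((μ (k / d) : ℤ) : ℂ) * (d : ℂ) ^ (p+1)) := by
      refine Finset.sum_congr rfl fun d hd => ?_
      rw [Nat.mem_divisors] at hd
      obtain ⟨hdk, -⟩ := hd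
      have hd0 : 0 < d := Nat.pos_of_ne_zero (by
        rintro rfl; rw [zero_dvd_iff] at hdk; exact hk0 hdk)
      have hq0 : 0 < k / d := Nat.div_pos (Nat.le_of_dvd hk hdk) hd0
      have hkdq : k = d * (k / d) := (Nat.mul_div_cancel' hdk).symm
      have hdC : (d : ℂ) ≠ 0 := Nat.cast_ne_zero.2 hd0.ne'
      have hqC : ((k / d : ℕ) : ℂ) ≠ 0 := Nat.cast_ne_zero.2 hq0.ne'
      have hkC : (k : ℂ) = (d : ℂ) * ((k / d : ℕ) : ℂ) :=
        mod_cast congrArg (fun x : ℕ => (x : ℂ)) hkdq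
      have himg : (Finset.range k).filter (fun a => d ∣ a)
          = (Finset.range (k / d)).image (fun t => d * t) := by
        ext a
        simp only [Finset.mem_filter, Finset.mem_range, Finset.mem_image]
        constructor
        · rintro ⟨hak, t, rfl⟩
          refine ⟨t, ?_, rfl⟩
          rw [hkdq] at hak
          exact Nat.lt_of_mul_lt_mul_left hak
        · rintro ⟨t, htq, rfl⟩
          refine ⟨?_, ⟨t, rfl⟩⟩
          rw [hkdq]
          exact mul_lt_mul_of_pos_left htq hd0
      calc ∑ j ∈ Finset.range k,
            ((((Polynomial.bernoulli (p+1)).eval ((j : ℚ) / (k : ℚ)) : ℚ)) : ℂ) *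
              (((μ (k / d) : ℤ) : ℂ) * (if (d : ℤ) ∣ (j : ℤ) then (d : ℂ) else 0))
          = ∑ j ∈ (Finset.range k).filter (fun a => d ∣ a),
              ((((Polynomial.bernoulli (p+1)).eval ((j : ℚ) / (k : ℚ)) : ℚ)) : ℂ) *
                (((μ (k / d) : ℤ) : ℂ) * (d : ℂ)) := by
            rw [Finset.sum_filter]
            refine Finset.sum_congr rfl fun a _ => ?_
            simp only [Int.natCast_dvd_natCast, mul_ite, mul_zero]
      _ = ∑ t ∈ Finset.range (k / d),
              ((((Polynomial.bernoulli (p+1)).eval ((t : ℚ) / ((k / d : ℕ) : ℚ)) : ℚ)) : ℂ) *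
                (((μ (k / d) : ℤ) : ℂ) * (d : ℂ)) := by
            rw [himg, Finset.sum_image (fun s _ t _ h => Nat.eq_of_mul_eq_mul_left hd0 h)]
            refine Finset.sum_congr rfl fun t _ => ?_
            congr 3
            have hdQ : (d : ℚ) ≠ 0 := Nat.cast_ne_zero.2 hd0.ne'
            have hqQ : ((k / d : ℕ) : ℚ) ≠ 0 := Nat.cast_ne_zero.2 hq0.ne'
            have hkQ : (k : ℚ) = (d : ℚ) * ((k / d : ℕ) : ℚ) :=
              mod_cast congrArg (fun x : ℕ => (x : ℚ)) hkdq
            rw [hkQ]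
            push_cast
            field_simp
      _ = (((∑ t ∈ Finset.range (k / d),
              (Polynomial.bernoulli (p+1)).eval ((t : ℚ) / ((k / d : ℕ) : ℚ)) : ℚ)) : ℂ) *
            (((μ (k / d) : ℤ) : ℂ) * (d : ℂ)) := by
            rw [← Finset.sum_mul]
            congr 1
            push_cast
            rfl
      _ = ((bernoulli (p+1) : ℂ) / (k : ℂ) ^ (p + 1 - 1)) *
            (((μ (k / d) : ℤ) : ℂ) * (d : ℂ) ^ (p+1)) := by
          have hC : ((k / d : ℕ) : ℂ) ^ (p+1) *
              ((∑ t ∈ Finset.range (k / d),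
                (Polynomial.bernoulli (p+1)).eval ((t : ℚ) / ((k / d : ℕ) : ℚ)) : ℚ) : ℂ)
              = (bernoulli (p+1) : ℂ) * ((k / d : ℕ) : ℂ) := by
            exact_mod_cast congrArg (fun x : ℚ => (x : ℂ)) (raabe (p+1) (k / d) hq0)
          have hS : ((∑ t ∈ Finset.range (k / d),
                (Polynomial.bernoulli (p+1)).eval ((t : ℚ) / ((k / d : ℕ) : ℚ)) : ℚ) : ℂ)
              = (bernoulli (p+1) : ℂ) * ((k / d : ℕ) : ℂ) / ((k / d : ℕ) : ℂ) ^ (p+1) := by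
            rw [eq_div_iff (pow_ne_zero _ hqC)]
            linear_combination hC
          have hkne : (k : ℂ) ≠ 0 := Nat.cast_ne_zero.2 hk0
          rw [hS, Nat.add_sub_cancel, div_mul_eq_mul_div, div_mul_eq_mul_div,
            div_eq_div_iff (pow_ne_zero _ hqC) (pow_ne_zero _ hkne)]
          rw [hkC, mul_pow]
          ring
  _ = ((bernoulli (p+1) : ℂ) / (k : ℂ) ^ (p + 1 - 1)) *
        ∑ d ∈ k.divisors, ((μ (k / d) : ℤ) : ℂ) * (d : ℂ) ^ (p+1) := by
      rw [Finset.mul_sum]
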